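/- Let λ ∈ ℬ(G) and let (e_ν) be a bounded approximate identity for A, i.e., a net in A with sup_ν ‖e_ν‖ < ∞ and ‖e_ν a − a‖ → 0 and ‖a e_ν − a‖ → 0 for every a ∈ A. Then for every c ∈ A, ‖c · p_λ(e_ν) − (∫ λ(x) dx) · c‖ → 0 and ‖p_λ(e_ν) · c − (∫ λ(x) dx) · c‖ → 0 along the net ν. -/

import Mathlib

open MeasureTheory Filter Topology

-- uniform convergence to zero on compact sets, for "equi-Lipschitz" families
lemma unif_aux {A : Type*} [NormedAddCommGroup A] {ι : Type*} [Preorder ι] [Nonempty ι]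
    [IsDirected ι (· ≤ ·)] (f : A → ι → A) (D : ℝ) (hD : 0 < D)
    (hlip : ∀ a b ν, ‖f a ν - f b ν‖ ≤ D * ‖a - b‖)
    (hf : ∀ a, Tendsto (fun ν => ‖f a ν‖) atTop (𝓝 0))
    {K : Set A} (hK : IsCompact K) {ε : ℝ} (hε : 0 < ε) :
    ∃ ν0, ∀ ν, ν0 ≤ ν → ∀ a ∈ K, ‖f a ν‖ ≤ ε := by
  classical
  set δ : ℝ := ε / (2 * D) with hδdef
  have hδ : 0 < δ := by positivity
  obtain ⟨t, ht⟩ := hK.elim_finite_subcover (fun a => Metric.ball a δ)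
    (fun a => Metric.isOpen_ball) (fun a ha => Set.mem_iUnion.2 ⟨a, Metric.mem_ball_self hδ⟩)
  have hch : ∀ a : A, ∃ ν0 : ι, ∀ ν ≥ ν0, ‖f a ν‖ < ε / 2 := by
    intro a
    have := (hf a).eventually (gt_mem_nhds (by positivity : (0:ℝ) < ε / 2))
    exact eventually_atTop.1 this
  choose g hg using hch
  obtain ⟨ν0, hν0⟩ := (t.image g).exists_le
  refine ⟨ν0, fun ν hν a ha => ?_⟩
  obtain ⟨b, hbt, hab⟩ := Set.mem_iUnion₂.1 (ht ha)
  have hb : ‖f b ν‖ < ε / 2 := hg b ν (le_trans (hν0 _ (Finset.mem_image_of_mem g hbt)) hν)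
  have h1 : ‖f a ν‖ ≤ ‖f a ν - f b ν‖ + ‖f b ν‖ := by
    simpa using norm_add_le (f a ν - f b ν) (f b ν)
  have h2 : ‖f a ν - f b ν‖ ≤ D * ‖a - b‖ := hlip a b ν
  have h3 : ‖a - b‖ < δ := by simpa [dist_eq_norm] using hab
  have h4 : D * ‖a - b‖ < D * δ := mul_lt_mul_of_pos_left h3 hD
  have h5 : D * δ = ε / 2 := by rw [hδdef]; field_simp
  linarith

-- tendsto zero for integrals with uniformly small integrands supported on a finite-measure set
lemma int_aux {G : Type*} [MeasurableSpace G] (μ : Measure G)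
    {A : Type*} [NormedAddCommGroup A] [NormedSpace ℝ A] {ι : Type*} [Preorder ι]
    (s : Set G) (hs : MeasurableSet s) (hμs : μ s < ⊤)
    (F : ι → G → A) [Nonempty ι] [IsDirected ι (· ≤ ·)]
    (h : ∀ ε > 0, ∃ ν0, ∀ ν, ν0 ≤ ν → ∀ x, ‖F ν x‖ ≤ s.indicator (fun _ => ε) x) :
    Tendsto (fun ν => ‖∫ x, F ν x ∂μ‖) atTop (𝓝 0) := by
  rw [Metric.tendsto_nhds]
  intro ε hε
  set M : ℝ := (μ s).toReal with hM
  have hM0 : 0 ≤ M := ENNReal.toReal_nonneg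
  set ε' : ℝ := ε / (2 * (M + 1)) with hε'
  have hε'0 : 0 < ε' := by positivity
  obtain ⟨ν0, hν0⟩ := h ε' hε'0
  rw [eventually_atTop]
  refine ⟨ν0, fun ν hν => ?_⟩
  have hint : Integrable (s.indicator fun _ => ε') μ :=
    (integrable_indicator_iff hs).2 (integrableOn_const hμs.ne)
  have hle : ‖∫ x, F ν x ∂μ‖ ≤ ∫ x, s.indicator (fun _ => ε') x ∂μ :=
    norm_integral_le_of_norm_le hint (Eventually.of_forall (hν0 ν hν))
  have heq : ∫ x, s.indicator (fun _ => ε') x ∂μ = M * ε' := by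
    rw [integral_indicator_const _ hs]; simp [hM, smul_eq_mul]; exact Or.inl rfl
  have hlt : M * ε' < ε := by
    have : ε' * (2 * (M + 1)) = ε := by rw [hε']; field_simp
    nlinarith
  simp only [Real.dist_eq, sub_zero]
  rw [abs_of_nonneg (norm_nonneg _)]
  linarith [heq ▸ hle]

/-- For `λ ∈ ℬ(G)` and a bounded approximate identity `(e_ν)` of `A`, the net
`(p_λ(e_ν))` converges strictly in `M(A)` to `(∫ λ(x) dx)·1`, i.e. for every `c ∈ A`,
`‖c p_λ(e_ν) − (∫λ)c‖ → 0` and `‖p_λ(e_ν) c − (∫λ)c‖ → 0`. -/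
theorem stmt4
    {G : Type*} [Group G] [TopologicalSpace G] [IsTopologicalGroup G]
    [LocallyCompactSpace G] [MeasurableSpace G] [BorelSpace G]
    (μ : Measure G) [μ.IsHaarMeasure]
    {A : Type*} [NonUnitalCStarAlgebra A]
    (α : G → (A ≃⋆ₐ[ℂ] A))
    (hone : ∀ a : A, α 1 a = a)
    (hmul : ∀ (x y : G) (a : A), α (x * y) a = α x (α y a))
    (hα : ∀ a : A, Continuous fun x => α x a)
    (lam : G → ℝ) (hlam_meas : Measurable lam) (hlam_supp : HasCompactSupport lam)
    (hlam0 : ∀ x, 0 ≤ lam x) (hlam1 : ∀ x, lam x ≤ 1)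
    {ι : Type*} [Preorder ι] [Nonempty ι] [IsDirected ι (· ≤ ·)]
    (e : ι → A) (hbdd : ∃ C : ℝ, ∀ ν, ‖e ν‖ ≤ C)
    (hai : ∀ a : A,
      Tendsto (fun ν => ‖e ν * a - a‖) atTop (𝓝 0) ∧
      Tendsto (fun ν => ‖a * e ν - a‖) atTop (𝓝 0)) :
    ∀ c : A,
      Tendsto (fun ν =>
        ‖c * (∫ x, (lam x : ℂ) • α x (e ν) ∂μ) - ((∫ x, lam x ∂μ : ℝ) : ℂ) • c‖)
        atTop (𝓝 0) ∧
      Tendsto (fun ν =>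
        ‖(∫ x, (lam x : ℂ) • α x (e ν) ∂μ) * c - ((∫ x, lam x ∂μ : ℝ) : ℂ) • c‖)
        atTop (𝓝 0) := by
  intro c
  obtain ⟨C, hC⟩ := hbdd
  have hC0 : 0 ≤ C := le_trans (norm_nonneg _) (hC (Classical.arbitrary ι))
  set s : Set G := tsupport lam with hsdef
  have hscpt : IsCompact s := hlam_supp
  have hsm : MeasurableSet s := (isClosed_tsupport lam).measurableSet
  have hsμ : μ s < ⊤ := hscpt.measure_lt_top
  have hzero : ∀ x ∉ s, lam x = 0 := fun x hx => image_eq_zero_of_notMem_tsupport hx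
  have hnorm_lam : ∀ x, ‖(lam x : ℂ)‖ = lam x := fun x => by
    rw [Complex.norm_real, Real.norm_eq_abs, abs_of_nonneg (hlam0 x)]
  -- integrability of the integrands
  have hint_ind : ∀ r : ℝ, Integrable (s.indicator fun _ => r) μ := fun r =>
    (integrable_indicator_iff hsm).2 (integrableOn_const hsμ.ne)
  have hbound : ∀ (b : A) (f : G → A), (∀ x, ‖f x‖ ≤ ‖b‖) →
      ∀ x, ‖(lam x : ℂ) • f x‖ ≤ s.indicator (fun _ => ‖b‖) x := by
    intro b f hf x
    rw [norm_smul, hnorm_lam]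
    by_cases hx : x ∈ s
    · rw [Set.indicator_of_mem hx]
      calc lam x * ‖f x‖ ≤ 1 * ‖b‖ :=
            mul_le_mul (hlam1 x) (hf x) (norm_nonneg _) zero_le_one
        _ = ‖b‖ := one_mul _
    · rw [Set.indicator_of_notMem hx, hzero x hx]
      simp
  have hlamsm : StronglyMeasurable (fun x => (lam x : ℂ)) :=
    (Complex.measurable_ofReal.comp hlam_meas).stronglyMeasurable
  have hmeas1 : ∀ b : A, AEStronglyMeasurable (fun x => (lam x : ℂ) • α x b) μ := by
    intro b
    have hg : StronglyMeasurable (s.indicator fun x => α x b) := by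
      borelize A
      rw [stronglyMeasurable_iff_measurable_separable]
      refine ⟨((hα b).measurable).indicator hsm, ?_⟩
      refine TopologicalSpace.IsSeparable.mono (((Set.countable_singleton (0 : A)).isSeparable).union
        ((hscpt.image (hα b)).isSeparable)) ?_
      rintro y ⟨x, rfl⟩
      by_cases hx : x ∈ s
      · exact Or.inr ⟨x, hx, (Set.indicator_of_mem hx fun x => (α x) b).symm⟩
      · rw [Set.indicator_of_notMem hx]; exact Or.inl rfl
    have heq : (fun x => (lam x : ℂ) • α x b)
        = fun x => (lam x : ℂ) • s.indicator (fun x => α x b) x := by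
      funext x
      by_cases hx : x ∈ s
      · rw [Set.indicator_of_mem hx]
      · rw [Set.indicator_of_notMem hx, hzero x hx]; simp
    rw [heq]
    exact (hlamsm.smul hg).aestronglyMeasurable
  have hint1 : ∀ b : A, Integrable (fun x => (lam x : ℂ) • α x b) μ := by
    intro b
    refine Integrable.mono' (hint_ind ‖b‖) (hmeas1 b) (Eventually.of_forall ?_)
    exact hbound b _ (fun x => le_of_eq (StarAlgEquiv.norm_map (α x) b))
  have hint2 : Integrable (fun x => (lam x : ℂ) • c) μ := by
    refine Integrable.mono' (hint_ind ‖c‖)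
      ((hlamsm.smul_const c).aestronglyMeasurable) (Eventually.of_forall ?_)
    exact hbound c _ (fun x => le_rfl)
  -- the scalar identity
  have hsc : ((∫ x, lam x ∂μ : ℝ) : ℂ) • c = ∫ x, (lam x : ℂ) • c ∂μ := by
    rw [integral_smul_const]
    congr 1
    exact (integral_ofReal (𝕜 := ℂ)).symm
  -- the inner algebraic identities
  have hx_left : ∀ (x : G) (b : A), c * α x b - c = α x (α x⁻¹ c * b - α x⁻¹ c) := by
    intro x b
    have : α x (α x⁻¹ c) = c := by rw [← hmul, mul_inv_cancel, hone]
    rw [map_sub, map_mul, this]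
  have hx_right : ∀ (x : G) (b : A), α x b * c - c = α x (b * α x⁻¹ c - α x⁻¹ c) := by
    intro x b
    have : α x (α x⁻¹ c) = c := by rw [← hmul, mul_inv_cancel, hone]
    rw [map_sub, map_mul, this]
  -- the compact set of translates of c
  have hKcpt : IsCompact ((fun x => α x⁻¹ c) '' s) :=
    hscpt.image ((hα c).comp continuous_inv)
  constructor
  · -- left multiplication
    have eq1 : ∀ ν, c * (∫ x, (lam x : ℂ) • α x (e ν) ∂μ) - ((∫ x, lam x ∂μ : ℝ) : ℂ) • c
        = ∫ x, (lam x : ℂ) • (c * α x (e ν) - c) ∂μ := by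
      intro ν
      have hL := (ContinuousLinearMap.mul ℂ A c).integral_comp_comm (hint1 (e ν))
      simp only [ContinuousLinearMap.mul_apply'] at hL
      have hint1' : Integrable (fun x => c * ((lam x : ℂ) • α x (e ν))) μ :=
        (ContinuousLinearMap.mul ℂ A c).integrable_comp (hint1 (e ν))
      rw [← hL, hsc, ← integral_sub hint1' hint2]
      congr 1; funext x
      rw [mul_smul_comm, smul_sub]
    simp only [eq1]
    apply int_aux μ s hsm hsμ
    intro ε hε
    obtain ⟨ν0, hν0⟩ := unif_aux (fun a ν => a * e ν - a) (C + 1) (by positivity)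
      (fun a b ν => by
        have h0 : a * e ν - a - (b * e ν - b) = (a - b) * e ν - (a - b) := by noncomm_ring
        rw [h0]
        have h1 : ‖(a - b) * e ν - (a - b)‖ ≤ ‖(a - b) * e ν‖ + ‖a - b‖ := norm_sub_le _ _
        have h2 := norm_mul_le (a - b) (e ν)
        have h3 := hC ν
        nlinarith [norm_nonneg (a - b), norm_nonneg (e ν)])
      (fun a => (hai a).2) hKcpt hε
    refine ⟨ν0, fun ν hν x => ?_⟩
    by_cases hx : x ∈ s
    · rw [Set.indicator_of_mem hx, norm_smul, hnorm_lam, hx_left x (e ν),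
        StarAlgEquiv.norm_map]
      have hK := hν0 ν hν (α x⁻¹ c) ⟨x, hx, rfl⟩
      calc lam x * ‖α x⁻¹ c * e ν - α x⁻¹ c‖ ≤ 1 * ε :=
            mul_le_mul (hlam1 x) hK (norm_nonneg _) zero_le_one
        _ = ε := one_mul _
    · rw [Set.indicator_of_notMem hx, hzero x hx]
      simp
  · -- right multiplication
    have eq1 : ∀ ν, (∫ x, (lam x : ℂ) • α x (e ν) ∂μ) * c - ((∫ x, lam x ∂μ : ℝ) : ℂ) • c
        = ∫ x, (lam x : ℂ) • (α x (e ν) * c - c) ∂μ := by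
      intro ν
      have hL := ((ContinuousLinearMap.mul ℂ A).flip c).integral_comp_comm (hint1 (e ν))
      simp only [ContinuousLinearMap.flip_apply, ContinuousLinearMap.mul_apply'] at hL
      have hint1' : Integrable (fun x => ((lam x : ℂ) • α x (e ν)) * c) μ := by
        have := ((ContinuousLinearMap.mul ℂ A).flip c).integrable_comp (hint1 (e ν))
        simpa only [ContinuousLinearMap.flip_apply, ContinuousLinearMap.mul_apply'] using this
      rw [← hL, hsc, ← integral_sub hint1' hint2]
      congr 1; funext x
      rw [smul_mul_assoc, smul_sub]
    simp only [eq1]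
    apply int_aux μ s hsm hsμ
    intro ε hε
    obtain ⟨ν0, hν0⟩ := unif_aux (fun a ν => e ν * a - a) (C + 1) (by positivity)
      (fun a b ν => by
        have h0 : e ν * a - a - (e ν * b - b) = e ν * (a - b) - (a - b) := by noncomm_ring
        rw [h0]
        have h1 : ‖e ν * (a - b) - (a - b)‖ ≤ ‖e ν * (a - b)‖ + ‖a - b‖ := norm_sub_le _ _
        have h2 := norm_mul_le (e ν) (a - b)
        have h3 := hC ν
        nlinarith [norm_nonneg (a - b), norm_nonneg (e ν)])
      (fun a => (hai a).1) hKcpt hε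
    refine ⟨ν0, fun ν hν x => ?_⟩
    by_cases hx : x ∈ s
    · rw [Set.indicator_of_mem hx, norm_smul, hnorm_lam, hx_right x (e ν),
        StarAlgEquiv.norm_map]
      have hK := hν0 ν hν (α x⁻¹ c) ⟨x, hx, rfl⟩
      calc lam x * ‖e ν * α x⁻¹ c - α x⁻¹ c‖ ≤ 1 * ε :=
            mul_le_mul (hlam1 x) hK (norm_nonneg _) zero_le_one
        _ = ε := one_mul _
    · rw [Set.indicator_of_notMem hx, hzero x hx]
      simp
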